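/- For any d-variate cumulative distribution function F with continuous univariate margins F_1,...,F_d, there exists a unique copula C: [0,1]^d → [0,1] such that F(x_1,...,x_d) = C(F_1(x_1),...,F_d(x_d)) for all (x_1,...,x_d) ∈ ℝ^d. -/

import Mathlib

open MeasureTheory

/-- A `d`-dimensional copula, identified with its multivariate CDF on `ℝ^d`:
the CDF of a probability measure concentrated on `[0,1]^d` whose univariate
margins are uniform on `[0,1]`. -/
def IsCopula (d : ℕ) (C : (Fin d → ℝ) → ℝ) : Prop :=
  ∃ ν : Measure (Fin d → ℝ), IsProbabilityMeasure ν ∧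
    (∀ i : Fin d, ν.map (fun y => y i) = volume.restrict (Set.Icc (0 : ℝ) 1)) ∧
    ∀ u : Fin d → ℝ, C u = (ν {y | ∀ i, y i ≤ u i}).toReal


open MeasureTheory Set Filter Topology
open scoped ENNReal


lemma cdf_mono (m : Measure ℝ) [IsProbabilityMeasure m] {F : ℝ → ℝ}
    (hFd : ∀ t, F t = (m (Set.Iic t)).toReal) : Monotone F := by
  intro a b hab
  rw [hFd, hFd]
  exact ENNReal.toReal_mono (measure_ne_top _ _) (measure_mono (Iic_subset_Iic.2 hab))

lemma cdf_nonneg (m : Measure ℝ) [IsProbabilityMeasure m] {F : ℝ → ℝ}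
    (hFd : ∀ t, F t = (m (Set.Iic t)).toReal) (t : ℝ) : 0 ≤ F t := by
  rw [hFd]; exact ENNReal.toReal_nonneg

lemma cdf_le_one (m : Measure ℝ) [IsProbabilityMeasure m] {F : ℝ → ℝ}
    (hFd : ∀ t, F t = (m (Set.Iic t)).toReal) (t : ℝ) : F t ≤ 1 := by
  rw [hFd]
  have : m (Set.Iic t) ≤ 1 := prob_le_one
  calc (m (Set.Iic t)).toReal ≤ (1 : ℝ≥0∞).toReal :=
        ENNReal.toReal_mono (by simp) this
    _ = 1 := by simp

lemma cdf_exists_hi (m : Measure ℝ) [IsProbabilityMeasure m] {F : ℝ → ℝ}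
    (hFd : ∀ t, F t = (m (Set.Iic t)).toReal) {t : ℝ} (ht : t < 1) : ∃ b, t < F b := by
  have h1 : Tendsto (fun x => m (Set.Iic x)) atTop (𝓝 (m Set.univ)) :=
    tendsto_measure_Iic_atTop m
  have h2 : Tendsto (fun x => (m (Set.Iic x)).toReal) atTop (𝓝 ((m Set.univ)).toReal) :=
    (ENNReal.tendsto_toReal (measure_ne_top _ _)).comp h1
  have h3 : Tendsto F atTop (𝓝 1) := by
    simpa [measure_univ, funext hFd] using h2
  obtain ⟨b, hb⟩ := (h3.eventually (eventually_gt_nhds ht)).exists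
  exact ⟨b, hb⟩

lemma cdf_exists_lo (m : Measure ℝ) [IsProbabilityMeasure m] {F : ℝ → ℝ}
    (hFd : ∀ t, F t = (m (Set.Iic t)).toReal) {t : ℝ} (ht : 0 < t) : ∃ a, F a < t := by
  have h1 : Tendsto (fun x => m (Set.Iic x)) atBot (𝓝 (m (⋂ x : ℝ, Set.Iic x))) :=
    tendsto_measure_iInter_atBot (fun x => nullMeasurableSet_Iic)
      (fun a b hab => Iic_subset_Iic.2 hab) ⟨0, measure_ne_top _ _⟩
  have hempty : (⋂ x : ℝ, Set.Iic x) = ∅ := by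
    ext y
    simp only [mem_iInter, mem_Iic, mem_empty_iff_false, iff_false, not_forall, not_le]
    exact ⟨y - 1, by linarith⟩
  rw [hempty, measure_empty] at h1
  have h2 : Tendsto (fun x => (m (Set.Iic x)).toReal) atBot (𝓝 (0 : ℝ)) := by
    simpa [Function.comp_def] using (ENNReal.tendsto_toReal (by simp)).comp h1
  have h3 : Tendsto F atBot (𝓝 0) := by simpa [funext hFd] using h2
  obtain ⟨a, ha⟩ := (h3.eventually (eventually_lt_nhds ht)).exists
  exact ⟨a, ha⟩


/-- The probability integral transform: pushing a measure forward by its own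
continuous CDF gives the uniform distribution on `[0,1]`. -/
lemma uniform_pit (m : Measure ℝ) [IsProbabilityMeasure m] {F : ℝ → ℝ}
    (hFd : ∀ t, F t = (m (Set.Iic t)).toReal) (hc : Continuous F) :
    m.map F = volume.restrict (Set.Icc (0 : ℝ) 1) := by
  have hFmeas : Measurable F := hc.measurable
  haveI : IsProbabilityMeasure (m.map F) := Measure.isProbabilityMeasure_map hFmeas.aemeasurable
  refine Measure.ext_of_Iic _ _ (fun t => ?_)
  rw [Measure.map_apply hFmeas measurableSet_Iic, Measure.restrict_apply measurableSet_Iic]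
  have hinter : Set.Iic t ∩ Set.Icc (0 : ℝ) 1 = Set.Icc 0 (min 1 t) := by
    ext x
    simp only [mem_inter_iff, mem_Iic, mem_Icc, le_min_iff]
    constructor
    · rintro ⟨h1, h2, h3⟩; exact ⟨h2, h3, h1⟩
    · rintro ⟨h1, h2, h3⟩; exact ⟨h3, h1, h2⟩
  rw [hinter, Real.volume_Icc, sub_zero]
  rcases lt_or_ge t 0 with ht0 | ht0
  · have hpre : F ⁻¹' Set.Iic t = ∅ := by
      ext x
      simp only [mem_preimage, mem_Iic, mem_empty_iff_false, iff_false, not_le]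
      exact lt_of_lt_of_le ht0 (cdf_nonneg m hFd x)
    rw [hpre, measure_empty, ENNReal.ofReal_eq_zero.2 (by simp [ht0.le])]
  rcases le_or_gt 1 t with ht1 | ht1
  · have hpre : F ⁻¹' Set.Iic t = Set.univ := by
      ext x
      simp only [mem_preimage, mem_Iic, mem_univ, iff_true]
      exact le_trans (cdf_le_one m hFd x) ht1
    rw [hpre, measure_univ, min_eq_left ht1, ENNReal.ofReal_one]
  · -- 0 ≤ t < 1
    rw [min_eq_right ht1.le]
    set S := F ⁻¹' Set.Iic t with hS
    by_cases hne : S.Nonempty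
    · obtain ⟨b, hb⟩ := cdf_exists_hi m hFd ht1
      have hbdd : BddAbove S := by
        refine ⟨b, fun x hx => ?_⟩
        by_contra hxb
        push_neg at hxb
        exact absurd hx (not_le.2 (lt_of_lt_of_le hb (cdf_mono m hFd hxb.le)))
      have hclosed : IsClosed S := isClosed_Iic.preimage hc
      set s := sSup S with hs
      have hsmem : s ∈ S := hclosed.csSup_mem hne hbdd
      have hFs_le : F s ≤ t := hsmem
      have hFs_eq : F s = t := by
        by_contra hne'
        have hlt : F s < t := lt_of_le_of_ne hFs_le hne'
        have hmem : F ⁻¹' Set.Iio t ∈ 𝓝 s := hc.continuousAt.preimage_mem_nhds (Iio_mem_nhds hlt)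
        have hmem' : F ⁻¹' Set.Iio t ∈ 𝓝[>] s := nhdsWithin_le_nhds hmem
        obtain ⟨x, hx1, hx2⟩ := Filter.nonempty_of_mem (Filter.inter_mem hmem' self_mem_nhdsWithin)
        exact absurd (le_csSup hbdd (le_of_lt hx1 : F x ≤ t)) (not_le.2 hx2)
      have hSeq : S = Set.Iic s := by
        ext x
        constructor
        · exact fun hx => le_csSup hbdd hx
        · intro hx
          exact le_trans (cdf_mono m hFd hx) hFs_le
      rw [hSeq]
      rw [← hFs_eq, hFd s, ENNReal.ofReal_toReal (measure_ne_top _ _)]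
    · have hS0 : S = ∅ := not_nonempty_iff_eq_empty.1 hne
      have ht0' : t = 0 := by
        by_contra ht'
        have : 0 < t := lt_of_le_of_ne ht0 (Ne.symm ht')
        obtain ⟨a, ha⟩ := cdf_exists_lo m hFd this
        exact hne ⟨a, ha.le⟩
      rw [hS0, measure_empty, ht0', ENNReal.ofReal_zero]


lemma lower_set_measurable {d : ℕ} (u : Fin d → ℝ) :
    MeasurableSet {y : Fin d → ℝ | ∀ i, y i ≤ u i} := by
  have : {y : Fin d → ℝ | ∀ i, y i ≤ u i} = ⋂ i, (fun y : Fin d → ℝ => y i) ⁻¹' Set.Iic (u i) := by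
    ext y; simp [Set.mem_iInter]
  rw [this]
  exact MeasurableSet.iInter fun i => (measurable_pi_apply i) measurableSet_Iic

lemma margin_apply {d : ℕ} {ν : Measure (Fin d → ℝ)}
    (hm : ∀ i : Fin d, ν.map (fun y => y i) = volume.restrict (Set.Icc (0 : ℝ) 1))
    (i : Fin d) {E : Set ℝ} (hE : MeasurableSet E) :
    ν ((fun y : Fin d → ℝ => y i) ⁻¹' E) = volume (E ∩ Set.Icc (0 : ℝ) 1) := by
  rw [← Measure.map_apply (measurable_pi_apply i) hE, hm i, Measure.restrict_apply hE]

/-- One-sided Lipschitz estimate for a copula CDF. -/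
lemma copula_lip {d : ℕ} {ν : Measure (Fin d → ℝ)} [IsProbabilityMeasure ν]
    (hm : ∀ i : Fin d, ν.map (fun y => y i) = volume.restrict (Set.Icc (0 : ℝ) 1))
    (u v : Fin d → ℝ) :
    (ν {y | ∀ i, y i ≤ u i}).toReal ≤ (ν {y | ∀ i, y i ≤ v i}).toReal + ∑ i, |u i - v i| := by
  set A := {y : Fin d → ℝ | ∀ i, y i ≤ u i}
  set B := {y : Fin d → ℝ | ∀ i, y i ≤ v i}
  have hsub : A \ B ⊆ ⋃ i, (fun y : Fin d → ℝ => y i) ⁻¹' Set.Ioc (v i) (u i) := by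
    rintro y ⟨hyA, hyB⟩
    simp only [B, mem_setOf_eq, not_forall, not_le] at hyB
    obtain ⟨i, hi⟩ := hyB
    exact Set.mem_iUnion.2 ⟨i, hi, hyA i⟩
  have hbound : ν (A \ B) ≤ ∑ i, ENNReal.ofReal (|u i - v i|) := by
    calc ν (A \ B) ≤ ν (⋃ i, (fun y : Fin d → ℝ => y i) ⁻¹' Set.Ioc (v i) (u i)) :=
          measure_mono hsub
      _ ≤ ∑ i, ν ((fun y : Fin d → ℝ => y i) ⁻¹' Set.Ioc (v i) (u i)) :=
          measure_iUnion_fintype_le _ _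
      _ ≤ ∑ i, ENNReal.ofReal (|u i - v i|) := by
          refine Finset.sum_le_sum fun i _ => ?_
          rw [margin_apply hm i measurableSet_Ioc]
          calc volume (Set.Ioc (v i) (u i) ∩ Set.Icc (0:ℝ) 1)
              ≤ volume (Set.Ioc (v i) (u i)) := measure_mono Set.inter_subset_left
            _ = ENNReal.ofReal (u i - v i) := Real.volume_Ioc
            _ ≤ ENNReal.ofReal (|u i - v i|) := ENNReal.ofReal_le_ofReal (le_abs_self _)
  have hA : ν A ≤ ν B + ∑ i, ENNReal.ofReal (|u i - v i|) := by
    calc ν A ≤ ν (B ∪ (A \ B)) := measure_mono (fun y hy => by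
          by_cases h : y ∈ B
          · exact Or.inl h
          · exact Or.inr ⟨hy, h⟩)
      _ ≤ ν B + ν (A \ B) := measure_union_le _ _
      _ ≤ ν B + ∑ i, ENNReal.ofReal (|u i - v i|) := add_le_add_right hbound _
  have hne : ν B + ∑ i, ENNReal.ofReal (|u i - v i|) ≠ ⊤ := by
    refine ENNReal.add_ne_top.2 ⟨measure_ne_top _ _, ?_⟩
    exact (ENNReal.sum_lt_top.2 fun i _ => ENNReal.ofReal_lt_top).ne
  calc (ν A).toReal ≤ (ν B + ∑ i, ENNReal.ofReal (|u i - v i|)).toReal :=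
        ENNReal.toReal_mono hne hA
    _ = (ν B).toReal + ∑ i, |u i - v i| := by
        rw [ENNReal.toReal_add (measure_ne_top _ _) (by exact (ENNReal.sum_lt_top.2 fun i _ => ENNReal.ofReal_lt_top).ne),
          ENNReal.toReal_sum (fun i _ => ENNReal.ofReal_lt_top.ne)]
        simp [ENNReal.toReal_ofReal (abs_nonneg _)]

lemma copula_abs_lip {d : ℕ} {C : (Fin d → ℝ) → ℝ} (h : IsCopula d C) (u v : Fin d → ℝ) :
    |C u - C v| ≤ ∑ i, |u i - v i| := by
  obtain ⟨ν, hprob, hm, hC⟩ := h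
  haveI := hprob
  rw [abs_sub_le_iff]
  constructor
  · rw [hC u, hC v]
    have := copula_lip hm u v
    linarith
  · rw [hC u, hC v]
    have := copula_lip hm v u
    have he : ∑ i, |v i - u i| = ∑ i, |u i - v i| := by
      refine Finset.sum_congr rfl fun i _ => abs_sub_comm _ _
    linarith [he ▸ this]

/-- A copula CDF is unchanged by clamping the argument to `[0,1]` coordinatewise. -/
lemma copula_clamp {d : ℕ} {C : (Fin d → ℝ) → ℝ} (h : IsCopula d C) (u : Fin d → ℝ) :
    C u = C (fun i => max 0 (min (u i) 1)) := by
  obtain ⟨ν, hprob, hm, hC⟩ := h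
  haveI := hprob
  rw [hC, hC]
  by_cases hneg : ∃ i, u i < 0
  · obtain ⟨i, hi⟩ := hneg
    have h1 : ν {y : Fin d → ℝ | ∀ j, y j ≤ u j} = 0 := by
      refine le_antisymm ?_ zero_le
      calc ν {y : Fin d → ℝ | ∀ j, y j ≤ u j}
          ≤ ν ((fun y : Fin d → ℝ => y i) ⁻¹' Set.Iic (u i)) :=
            measure_mono (fun y hy => hy i)
        _ = volume (Set.Iic (u i) ∩ Set.Icc (0:ℝ) 1) := margin_apply hm i measurableSet_Iic
        _ = 0 := by
            have : Set.Iic (u i) ∩ Set.Icc (0:ℝ) 1 = ∅ := by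
              ext x; simp only [mem_inter_iff, mem_Iic, mem_Icc, mem_empty_iff_false, iff_false]
              rintro ⟨h1, h2, h3⟩; linarith
            rw [this, measure_empty]
    have h2 : ν {y : Fin d → ℝ | ∀ j, y j ≤ max 0 (min (u j) 1)} = 0 := by
      refine le_antisymm ?_ zero_le
      have hmax : max 0 (min (u i) 1) = 0 := by
        rw [max_eq_left]
        exact le_trans (min_le_left _ _) hi.le
      calc ν {y : Fin d → ℝ | ∀ j, y j ≤ max 0 (min (u j) 1)}
          ≤ ν ((fun y : Fin d → ℝ => y i) ⁻¹' Set.Iic 0) :=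
            measure_mono (fun y hy => by have := hy i; rw [hmax] at this; exact this)
        _ = volume (Set.Iic (0:ℝ) ∩ Set.Icc (0:ℝ) 1) := margin_apply hm i measurableSet_Iic
        _ = 0 := by
            have : Set.Iic (0:ℝ) ∩ Set.Icc (0:ℝ) 1 = {0} := by
              ext x; simp only [mem_inter_iff, mem_Iic, mem_Icc, mem_singleton_iff]
              constructor
              · rintro ⟨h1, h2, h3⟩; linarith
              · rintro rfl; norm_num
            rw [this]; exact measure_singleton 0
    rw [h1, h2]
  · push_neg at hneg
    have hclamp : ∀ j, max 0 (min (u j) 1) = min (u j) 1 := fun j =>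
      max_eq_right (le_min (hneg j) zero_le_one)
    set A := {y : Fin d → ℝ | ∀ j, y j ≤ u j}
    set B := {y : Fin d → ℝ | ∀ j, y j ≤ max 0 (min (u j) 1)}
    have hBA : B ⊆ A := fun y hy j =>
      le_trans (by rw [← hclamp j]; exact hy j) (min_le_left _ _)
    have hdiff : A \ B ⊆ ⋃ j, (fun y : Fin d → ℝ => y j) ⁻¹' Set.Ioi 1 := by
      rintro y ⟨hyA, hyB⟩
      simp only [mem_setOf_eq, not_forall, not_le, B] at hyB
      obtain ⟨j, hj⟩ := hyB
      rw [hclamp j] at hj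
      refine Set.mem_iUnion.2 ⟨j, ?_⟩
      have := hyA j
      simp only [mem_preimage, mem_Ioi]
      rcases le_total (u j) 1 with hle | hle
      · rw [min_eq_left hle] at hj; linarith
      · rw [min_eq_right hle] at hj; exact hj
    have hnull : ν (A \ B) = 0 := by
      refine le_antisymm ?_ zero_le
      calc ν (A \ B) ≤ ν (⋃ j, (fun y : Fin d → ℝ => y j) ⁻¹' Set.Ioi 1) := measure_mono hdiff
        _ ≤ ∑ j, ν ((fun y : Fin d → ℝ => y j) ⁻¹' Set.Ioi 1) := measure_iUnion_fintype_le _ _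
        _ = 0 := by
            refine Finset.sum_eq_zero fun j _ => ?_
            rw [margin_apply hm j measurableSet_Ioi]
            have : Set.Ioi (1:ℝ) ∩ Set.Icc (0:ℝ) 1 = ∅ := by
              ext x; simp only [mem_inter_iff, mem_Ioi, mem_Icc, mem_empty_iff_false, iff_false]
              rintro ⟨h1, h2, h3⟩; linarith
            rw [this, measure_empty]
    have : ν A = ν B := by
      refine le_antisymm ?_ (measure_mono hBA)
      calc ν A ≤ ν (B ∪ (A \ B)) := measure_mono (fun y hy => by
            by_cases h : y ∈ B
            · exact Or.inl h
            · exact Or.inr ⟨hy, h⟩)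
        _ ≤ ν B + ν (A \ B) := measure_union_le _ _
        _ = ν B := by rw [hnull, add_zero]
    rw [this]
/-- Two copulas that agree on the open cube `(0,1)^d` are equal. -/
lemma copula_eq {d : ℕ} {C C' : (Fin d → ℝ) → ℝ} (h : IsCopula d C) (h' : IsCopula d C')
    (hag : ∀ u : Fin d → ℝ, (∀ i, u i ∈ Set.Ioo (0:ℝ) 1) → C u = C' u) : C = C' := by
  funext u
  rw [copula_clamp h u, copula_clamp h' u]
  set w : Fin d → ℝ := fun i => max 0 (min (u i) 1) with hw
  have hw0 : ∀ i, 0 ≤ w i := fun i => le_max_left _ _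
  have hw1 : ∀ i, w i ≤ 1 := fun i => max_le (by norm_num) (min_le_right _ _)
  have key : ∀ ε : ℝ, 0 < ε → ε < 1/2 → |C w - C' w| ≤ 2 * d * ε := by
    intro ε hε hε2
    set wε : Fin d → ℝ := fun i => max ε (min (w i) (1 - ε)) with hwε
    have hwεIoo : ∀ i, wε i ∈ Set.Ioo (0:ℝ) 1 := by
      intro i
      constructor
      · exact lt_of_lt_of_le hε (le_max_left _ _)
      · apply max_lt (by linarith)
        exact lt_of_le_of_lt (min_le_right _ _) (by linarith)
    have hdist : ∀ i, |w i - wε i| ≤ ε := by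
      intro i
      rw [abs_le]
      constructor
      · -- -ε ≤ w i - wε i, i.e. wε i ≤ w i + ε
        have : wε i ≤ max ε (w i) := max_le_max le_rfl (min_le_left _ _)
        have h2 : max ε (w i) ≤ w i + ε := max_le (by linarith [hw0 i]) (by linarith)
        linarith
      · -- w i - wε i ≤ ε
        have : min (w i) (1 - ε) ≤ wε i := le_max_right _ _
        rcases le_total (w i) (1 - ε) with hle | hle
        · rw [min_eq_left hle] at this; linarith
        · rw [min_eq_right hle] at this; linarith [hw1 i]
    have hsum : ∑ i, |w i - wε i| ≤ d * ε := by
      calc ∑ i, |w i - wε i| ≤ ∑ __ : Fin d, ε := Finset.sum_le_sum fun i _ => hdist i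
        _ = d * ε := by simp [Finset.sum_const, mul_comm]
    have h1 : |C w - C wε| ≤ d * ε := le_trans (copula_abs_lip h w wε) hsum
    have h2 : |C' wε - C' w| ≤ d * ε := by
      refine le_trans (copula_abs_lip h' wε w) ?_
      calc ∑ i, |wε i - w i| = ∑ i, |w i - wε i| :=
            Finset.sum_congr rfl fun i _ => abs_sub_comm _ _
        _ ≤ d * ε := hsum
    have h3 : C wε = C' wε := hag wε hwεIoo
    calc |C w - C' w| = |(C w - C wε) + (C' wε - C' w)| := by rw [h3]; ring_nf
      _ ≤ |C w - C wε| + |C' wε - C' w| := abs_add_le _ _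
      _ ≤ 2 * d * ε := by linarith
  by_contra hne
  have hx : 0 < |C w - C' w| := abs_pos.2 (sub_ne_zero.2 hne)
  set x := |C w - C' w| with hxdef
  set ε := min (1/4) (x / (2 * d + 2)) with hεdef
  have hd0 : (0:ℝ) ≤ d := Nat.cast_nonneg d
  have hεpos : 0 < ε := lt_min (by norm_num) (div_pos hx (by linarith))
  have hεlt : ε < 1/2 := lt_of_le_of_lt (min_le_left _ _) (by norm_num)
  have hkey := key ε hεpos hεlt
  have hεle : ε ≤ x / (2 * d + 2) := min_le_right _ _
  have : 2 * d * ε < x := by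
    have h4 : 2 * d * ε ≤ 2 * d * (x / (2 * d + 2)) := by
      apply mul_le_mul_of_nonneg_left hεle (by linarith)
    have h5 : 2 * d * (x / (2 * d + 2)) < x := by
      have hpos : (0:ℝ) < 2 * d + 2 := by linarith
      have h6 : x / (2 * d + 2) * (2 * d + 2) = x := div_mul_cancel₀ x hpos.ne'
      have ht : 0 < x / (2 * d + 2) := div_pos hx hpos
      nlinarith
    linarith
  linarith


/-- **Sklar's theorem (uniqueness for continuous margins).** For any `d`-variate CDF `F`
(the CDF of a probability measure `μ` on `ℝ^d`) with continuous univariate margins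
`F₁, …, F_d`, there is a unique copula `C` with
`F (x₁, …, x_d) = C (F₁ x₁, …, F_d x_d)` for all `x ∈ ℝ^d`. -/
theorem sklar_unique (d : ℕ) (μ : Measure (Fin d → ℝ)) [IsProbabilityMeasure μ]
    (F : (Fin d → ℝ) → ℝ) (Fm : Fin d → ℝ → ℝ)
    (hF : ∀ x, F x = (μ {y | ∀ i, y i ≤ x i}).toReal)
    (hFm : ∀ i t, Fm i t = (μ.map (fun y => y i) (Set.Iic t)).toReal)
    (hcont : ∀ i, Continuous (Fm i)) :
    ∃! C : (Fin d → ℝ) → ℝ, IsCopula d C ∧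
      ∀ x : Fin d → ℝ, F x = C (fun i => Fm i (x i)) := by
  have hTmeas : Measurable (fun z : Fin d → ℝ => fun i => Fm i (z i)) :=
    measurable_pi_lambda _ fun i => (hcont i).measurable.comp (measurable_pi_apply i)
  set T : (Fin d → ℝ) → (Fin d → ℝ) := fun z i => Fm i (z i) with hTdef
  set ν : Measure (Fin d → ℝ) := μ.map T with hν
  haveI hνprob : IsProbabilityMeasure ν := Measure.isProbabilityMeasure_map hTmeas.aemeasurable
  haveI hmarg_i : ∀ i, IsProbabilityMeasure (μ.map (fun y : Fin d → ℝ => y i)) := fun i =>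
    Measure.isProbabilityMeasure_map (measurable_pi_apply i).aemeasurable
  have hFm' : ∀ i, ∀ t, Fm i t = ((μ.map (fun y : Fin d → ℝ => y i)) (Set.Iic t)).toReal :=
    fun i t => hFm i t
  have hpit : ∀ i, (μ.map (fun y : Fin d → ℝ => y i)).map (Fm i)
      = volume.restrict (Set.Icc (0:ℝ) 1) := fun i =>
    uniform_pit _ (hFm' i) (hcont i)
  have hνmarg : ∀ i : Fin d, ν.map (fun y => y i) = volume.restrict (Set.Icc (0:ℝ) 1) := by
    intro i
    rw [hν, Measure.map_map (measurable_pi_apply i) hTmeas]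
    have hco : (fun y : Fin d → ℝ => y i) ∘ T = (Fm i) ∘ (fun z : Fin d → ℝ => z i) := rfl
    rw [hco, ← Measure.map_map (hcont i).measurable (measurable_pi_apply i)]
    exact hpit i
  have hmono : ∀ i, Monotone (Fm i) := fun i => cdf_mono _ (hFm' i)
  set C : (Fin d → ℝ) → ℝ := fun u => (ν {y | ∀ i, y i ≤ u i}).toReal with hC
  have hCcop : IsCopula d C := ⟨ν, hνprob, hνmarg, fun u => rfl⟩
  -- the margin-null sets
  have hnulli : ∀ (x : Fin d → ℝ) (i : Fin d),
      (μ.map (fun y : Fin d → ℝ => y i)) ({t | Fm i t ≤ Fm i (x i)} \ Set.Iic (x i)) = 0 := by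
    intro x i
    set m := μ.map (fun y : Fin d → ℝ => y i) with hm
    have hSmeas : MeasurableSet {t : ℝ | Fm i t ≤ Fm i (x i)} :=
      (hcont i).measurable measurableSet_Iic
    have hSval : m {t : ℝ | Fm i t ≤ Fm i (x i)} = m (Set.Iic (x i)) := by
      have h1 : m {t : ℝ | Fm i t ≤ Fm i (x i)} = (m.map (Fm i)) (Set.Iic (Fm i (x i))) := by
        rw [Measure.map_apply (hcont i).measurable measurableSet_Iic]; rfl
      rw [h1, hm, hpit i, Measure.restrict_apply measurableSet_Iic]
      have h2 : Set.Iic (Fm i (x i)) ∩ Set.Icc (0:ℝ) 1 = Set.Icc 0 (Fm i (x i)) := by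
        have h0 : 0 ≤ Fm i (x i) := cdf_nonneg _ (hFm' i) _
        have h1' : Fm i (x i) ≤ 1 := cdf_le_one _ (hFm' i) _
        ext z
        simp only [mem_inter_iff, mem_Iic, mem_Icc]
        constructor
        · rintro ⟨ha, hb, hc⟩; exact ⟨hb, ha⟩
        · rintro ⟨ha, hb⟩; exact ⟨hb, ha, le_trans hb h1'⟩
      rw [h2, Real.volume_Icc, sub_zero, hFm' i (x i),
        ENNReal.ofReal_toReal (measure_ne_top _ _)]
    have hsub : Set.Iic (x i) ⊆ {t : ℝ | Fm i t ≤ Fm i (x i)} := fun t ht => hmono i ht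
    rw [measure_diff hsub nullMeasurableSet_Iic (measure_ne_top _ _), hSval, tsub_self]
  -- agreement of F with C ∘ margins
  have hagreeF : ∀ x, F x = C (fun i => Fm i (x i)) := by
    intro x
    have hA : MeasurableSet {y : Fin d → ℝ | ∀ i, y i ≤ Fm i (x i)} := lower_set_measurable _
    have hmap : ν {y : Fin d → ℝ | ∀ i, y i ≤ Fm i (x i)}
        = μ {z : Fin d → ℝ | ∀ i, Fm i (z i) ≤ Fm i (x i)} := by
      rw [hν, Measure.map_apply hTmeas hA]
      rfl
    have hBS : {z : Fin d → ℝ | ∀ i, z i ≤ x i} ⊆ {z | ∀ i, Fm i (z i) ≤ Fm i (x i)} :=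
      fun z hz i => hmono i (hz i)
    have hdiff : μ ({z : Fin d → ℝ | ∀ i, Fm i (z i) ≤ Fm i (x i)}
        \ {z | ∀ i, z i ≤ x i}) = 0 := by
      refine le_antisymm ?_ zero_le
      have hsub : {z : Fin d → ℝ | ∀ i, Fm i (z i) ≤ Fm i (x i)} \ {z | ∀ i, z i ≤ x i}
          ⊆ ⋃ i, (fun z : Fin d → ℝ => z i) ⁻¹'
              ({t : ℝ | Fm i t ≤ Fm i (x i)} \ Set.Iic (x i)) := by
        rintro z ⟨hz1, hz2⟩
        simp only [mem_setOf_eq, not_forall, not_le] at hz2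
        obtain ⟨i, hi⟩ := hz2
        exact Set.mem_iUnion.2 ⟨i, hz1 i, not_le.2 hi⟩
      calc μ _ ≤ μ (⋃ i, (fun z : Fin d → ℝ => z i) ⁻¹'
              ({t : ℝ | Fm i t ≤ Fm i (x i)} \ Set.Iic (x i))) := measure_mono hsub
        _ ≤ ∑ i, μ ((fun z : Fin d → ℝ => z i) ⁻¹'
              ({t : ℝ | Fm i t ≤ Fm i (x i)} \ Set.Iic (x i))) := measure_iUnion_fintype_le _ _
        _ = 0 := by
            refine Finset.sum_eq_zero fun i _ => ?_
            rw [← Measure.map_apply (measurable_pi_apply i)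
              (((hcont i).measurable measurableSet_Iic).diff measurableSet_Iic)]
            exact hnulli x i
    have hSB : μ {z : Fin d → ℝ | ∀ i, Fm i (z i) ≤ Fm i (x i)}
        = μ {z : Fin d → ℝ | ∀ i, z i ≤ x i} := by
      refine le_antisymm ?_ (measure_mono hBS)
      calc μ {z : Fin d → ℝ | ∀ i, Fm i (z i) ≤ Fm i (x i)}
          ≤ μ ({z : Fin d → ℝ | ∀ i, z i ≤ x i} ∪
              ({z : Fin d → ℝ | ∀ i, Fm i (z i) ≤ Fm i (x i)} \ {z | ∀ i, z i ≤ x i})) := by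
            refine measure_mono fun z hz => ?_
            by_cases h : z ∈ {z : Fin d → ℝ | ∀ i, z i ≤ x i}
            · exact Or.inl h
            · exact Or.inr ⟨hz, h⟩
        _ ≤ μ {z : Fin d → ℝ | ∀ i, z i ≤ x i} + μ _ := measure_union_le _ _
        _ = μ {z : Fin d → ℝ | ∀ i, z i ≤ x i} := by rw [hdiff, add_zero]
    rw [hF x, hC]
    simp only
    rw [hmap, hSB]
  refine ⟨C, ⟨hCcop, hagreeF⟩, ?_⟩
  rintro C' ⟨hC'cop, hC'eq⟩
  refine copula_eq hC'cop hCcop fun u hu => ?_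
  have hx : ∀ i, ∃ t, Fm i t = u i := by
    intro i
    obtain ⟨a, ha⟩ := cdf_exists_lo _ (hFm' i) (hu i).1
    obtain ⟨b, hb⟩ := cdf_exists_hi _ (hFm' i) (hu i).2
    have hab : min a b ≤ max a b := min_le_max
    have ha' : Fm i (min a b) < u i := lt_of_le_of_lt (hmono i (min_le_left a b)) ha
    have hb' : u i < Fm i (max a b) := lt_of_lt_of_le hb (hmono i (le_max_right a b))
    have := intermediate_value_Icc hab ((hcont i).continuousOn)
    obtain ⟨t, _, ht⟩ := this ⟨ha'.le, hb'.le⟩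
    exact ⟨t, ht⟩
  choose x hxeq using hx
  have hux : (fun i => Fm i (x i)) = u := funext hxeq
  have h1 := (hC'eq x).symm.trans (hagreeF x)
  rw [hux] at h1
  exact h1
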